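/- For a single centered cluster with variance Δ > 0 and learning rate 0 < η < 2/Δ, the fixed point of the online SGD order-parameter ODEs gives asymptotic generalisation error ε_∞ = (1 − 2/π)/(1 − ηΔ/2). In particular ε_∞ ≥ 1 − 2/π with equality only in the limit η → 0, and ε_∞ → ∞ as η → (2/Δ)⁻. -/

import Mathlib

open Filter

/-- Single cluster, finite learning rate: at the SGD fixed point the asymptotic
generalisation error is `(1 − 2/π)/(1 − ηΔ/2)`; it strictly exceeds `1 − 2/π` and
diverges as `η → (2/Δ)⁻`. -/
theorem stmt12 (Δ η R Q : ℝ) (hΔ : 0 < Δ) (hη : 0 < η) (hη2 : η < 2 / Δ)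
    (hR : R = Real.sqrt (2 * Δ / Real.pi) / Δ)
    (hQ : 2 * η * (Real.sqrt (2 * Δ / Real.pi) * R - Δ * Q)
        + η ^ 2 * Δ * (1 + Δ * Q - 2 * Real.sqrt (2 * Δ / Real.pi) * R) = 0) :
    1 - 2 * Real.sqrt (2 * Δ / Real.pi) * R + Δ * Q
        = (1 - 2 / Real.pi) / (1 - η * Δ / 2) ∧
    1 - 2 / Real.pi < (1 - 2 / Real.pi) / (1 - η * Δ / 2) ∧
    Tendsto (fun e : ℝ => (1 - 2 / Real.pi) / (1 - e * Δ / 2))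
        (nhdsWithin (2 / Δ) (Set.Iio (2 / Δ))) atTop := by
  have hπ : 0 < Real.pi := Real.pi_pos
  have hβ2 : Real.sqrt (2 * Δ / Real.pi) ^ 2 = 2 * Δ / Real.pi := by
    rw [Real.sq_sqrt]; positivity
  have hβR : Real.sqrt (2 * Δ / Real.pi) * R = 2 / Real.pi := by
    rw [hR, mul_div_assoc', ← sq, hβ2]
    field_simp
  have h2βR : 2 * Real.sqrt (2 * Δ / Real.pi) * R = 4 / Real.pi := by
    rw [mul_assoc, hβR]; ring
  have hηΔ : η * Δ < 2 := (lt_div_iff₀ hΔ).mp hη2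
  have hden : 0 < 1 - η * Δ / 2 := by linarith
  have hnum : 0 < 1 - 2 / Real.pi := by
    have : 2 / Real.pi < 1 := (div_lt_one hπ).mpr (by linarith [Real.pi_gt_three])
    linarith
  have hQ' : Δ * Q * (2 - η * Δ) = 4 / Real.pi + η * Δ * (1 - 4 / Real.pi) := by
    rw [mul_assoc 2, hβR, h2βR] at hQ
    have hη0 : η ≠ 0 := hη.ne'
    apply mul_left_cancel₀ hη0
    linear_combination -hQ
  refine ⟨?_, ?_, ?_⟩
  · rw [h2βR, eq_div_iff (by linarith : (1 : ℝ) - η * Δ / 2 ≠ 0)]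
    linear_combination hQ' / 2
  · rw [lt_div_iff₀ hden]
    nlinarith [mul_pos hnum (mul_pos hη hΔ)]
  · have h1 : Tendsto (fun e : ℝ => 1 - e * Δ / 2) (nhdsWithin (2 / Δ) (Set.Iio (2 / Δ)))
        (nhdsWithin 0 (Set.Ioi 0)) := by
      rw [tendsto_nhdsWithin_iff]
      constructor
      · have hc : Tendsto (fun e : ℝ => 1 - e * Δ / 2) (nhds (2 / Δ))
            (nhds (1 - (2 / Δ) * Δ / 2)) := by
          exact (tendsto_const_nhds.sub ((tendsto_id.mul_const Δ).div_const 2))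
        have : 1 - (2 / Δ) * Δ / 2 = 0 := by field_simp; ring
        rw [this] at hc
        exact hc.mono_left nhdsWithin_le_nhds
      · filter_upwards [self_mem_nhdsWithin] with e he
        have : e * Δ < 2 := by
          exact (lt_div_iff₀ hΔ).mp he
        simp only [Set.mem_Ioi]
        linarith
    have h2 : Tendsto (fun e : ℝ => (1 - e * Δ / 2)⁻¹)
        (nhdsWithin (2 / Δ) (Set.Iio (2 / Δ))) atTop := h1.inv_tendsto_nhdsGT_zero
    have := h2.const_mul_atTop hnum
    simpa [div_eq_mul_inv] using this
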